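/- Let n, m ≥ 1, N = n(n+1)/2, and let B_1, ..., B_m be n×n real symmetric matrices. Let B ∈ M(N,m) be the coefficient matrix of (B_1,...,B_m) with respect to the standard orthonormal basis {Ê_α}_{α=1}^N of SM(n), i.e. B_r = Σ_{α=1}^N B_{αr} Ê_α. Suppose BBᵗ = Q diag(x_1,...,x_N) Qᵗ with Q = (q_{αβ}) ∈ SO(N) and x_α ≥ 0, and set Q̂_α = Σ_{β=1}^N q_{βα} Ê_β. Then Σ_{r,s=1}^m ‖[B_r, B_s]‖² = Σ_{α,β=1}^N x_α x_β ‖[Q̂_α, Q̂_β]‖², and Σ_{r=1}^m ‖B_r‖² = Σ_{α=1}^N x_α. -/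

import Mathlib

set_option maxHeartbeats 1000000


open Matrix BigOperators

/-- The squared Frobenius norm: sum of squares of the entries. -/
noncomputable def frobSq {n : ℕ} (A : Matrix (Fin n) (Fin n) ℝ) : ℝ :=
  ∑ i, ∑ j, (A i j) ^ 2

/-- The commutator of two matrices. -/
def mcomm {n : ℕ} (A B : Matrix (Fin n) (Fin n) ℝ) : Matrix (Fin n) (Fin n) ℝ :=
  A * B - B * A

/-- The standard orthonormal basis element `Ê_{ij}` of the space of symmetric matrices:
`Ê_{ii} = E_{ii}` and `Ê_{ij} = (E_{ij} + E_{ji})/√2` for `i ≠ j`. -/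
noncomputable def Ehat {n : ℕ} (i j : Fin n) : Matrix (Fin n) (Fin n) ℝ :=
  if i = j then Matrix.single i i (1 : ℝ)
  else (1 / Real.sqrt 2) •
    (Matrix.single i j (1 : ℝ) + Matrix.single j i (1 : ℝ))

namespace DCaux

variable {n : ℕ}

noncomputable def ip {n : ℕ} (X Y : Matrix (Fin n) (Fin n) ℝ) : ℝ := ∑ i, ∑ j, X i j * Y i j

lemma frobSq_eq_ip (X : Matrix (Fin n) (Fin n) ℝ) : frobSq X = ip X X := by
  simp [frobSq, ip, sq]

lemma ip_eq_trace (X Y : Matrix (Fin n) (Fin n) ℝ) : ip X Y = Matrix.trace (X * Yᵀ) := by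
  simp [ip, Matrix.trace, Matrix.mul_apply, Matrix.diag]

lemma ip_sum_left {ι : Type*} (s : Finset ι) (f : ι → Matrix (Fin n) (Fin n) ℝ)
    (Y : Matrix (Fin n) (Fin n) ℝ) : ip (∑ a ∈ s, f a) Y = ∑ a ∈ s, ip (f a) Y := by
  simp [ip_eq_trace, Finset.sum_mul]

lemma ip_sum_right {ι : Type*} (s : Finset ι) (X : Matrix (Fin n) (Fin n) ℝ)
    (f : ι → Matrix (Fin n) (Fin n) ℝ) : ip X (∑ a ∈ s, f a) = ∑ a ∈ s, ip X (f a) := by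
  simp [ip_eq_trace, Matrix.transpose_sum, Finset.mul_sum]

lemma ip_add_left (X Y Z : Matrix (Fin n) (Fin n) ℝ) : ip (X + Y) Z = ip X Z + ip Y Z := by
  simp [ip_eq_trace, Matrix.add_mul]

lemma ip_add_right (X Y Z : Matrix (Fin n) (Fin n) ℝ) : ip X (Y + Z) = ip X Y + ip X Z := by
  simp [ip_eq_trace, Matrix.mul_add]

lemma ip_smul_left (c : ℝ) (X Y : Matrix (Fin n) (Fin n) ℝ) : ip (c • X) Y = c * ip X Y := by
  simp [ip_eq_trace, smul_mul_assoc]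

lemma ip_smul_right (c : ℝ) (X Y : Matrix (Fin n) (Fin n) ℝ) : ip X (c • Y) = c * ip X Y := by
  simp [ip_eq_trace, Matrix.transpose_smul, mul_smul_comm]

lemma ip_sum_sum {ι κ : Type*} [Fintype ι] [Fintype κ] (c : ι → ℝ) (d : κ → ℝ)
    (M : ι → Matrix (Fin n) (Fin n) ℝ) (N : κ → Matrix (Fin n) (Fin n) ℝ) :
    ip (∑ p, c p • M p) (∑ q, d q • N q) = ∑ p, ∑ q, c p * d q * ip (M p) (N q) := by
  rw [ip_sum_left]
  refine Finset.sum_congr rfl fun p _ => ?_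
  rw [ip_sum_right]
  refine Finset.sum_congr rfl fun q _ => ?_
  rw [ip_smul_left, ip_smul_right]; ring

lemma mcomm_sum {ι : Type*} [Fintype ι] (u v : ι → ℝ) (E : ι → Matrix (Fin n) (Fin n) ℝ) :
    mcomm (∑ α, u α • E α) (∑ β, v β • E β)
      = ∑ p : ι × ι, (u p.1 * v p.2) • mcomm (E p.1) (E p.2) := by
  simp only [mcomm, Fintype.sum_prod_type, smul_sub, Finset.sum_sub_distrib,
    Finset.sum_mul, Finset.mul_sum, smul_mul_assoc, mul_smul_comm, smul_smul,
    Finset.smul_sum]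
  congr 1
  rw [Finset.sum_comm]
  simp [mul_comm]

lemma swap_sum {K J : Type*} [Fintype K] [Fintype J] (c c' : K → J → ℝ) (T : J → J → ℝ) :
    ∑ k, ∑ p, ∑ q, c k p * c' k q * T p q = ∑ p, ∑ q, (∑ k, c k p * c' k q) * T p q := by
  rw [Finset.sum_comm]
  refine Finset.sum_congr rfl fun p _ => ?_
  rw [Finset.sum_comm]
  refine Finset.sum_congr rfl fun q _ => ?_
  rw [Finset.sum_mul]

lemma ip_std (a b c d : Fin n) :
    ip (Matrix.single a b (1:ℝ)) (Matrix.single c d 1)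
      = if a = c ∧ b = d then 1 else 0 := by
  simp only [ip, Matrix.single, Matrix.of_apply]
  by_cases h1 : a = c <;> by_cases h2 : b = d
  · subst h1; subst h2; simp [Finset.sum_ite_eq', ite_and]
  · simp [h1, h2, ite_and, Finset.sum_ite_eq']
  · simp [h1, h2, ite_and, Finset.sum_ite_eq']
  · simp [h1, h2, ite_and, Finset.sum_ite_eq']

lemma ip_Ehat {i j k l : Fin n} (hij : i ≤ j) (hkl : k ≤ l) :
    ip (Ehat i j) (Ehat k l) = if i = k ∧ j = l then 1 else 0 := by
  have h2 : Real.sqrt 2 * Real.sqrt 2 = 2 := Real.mul_self_sqrt (by norm_num)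
  have h2ne : Real.sqrt 2 ≠ 0 := by positivity
  rcases eq_or_lt_of_le hij with rfl | hij <;> rcases eq_or_lt_of_le hkl with rfl | hkl
  · rw [Ehat, if_pos rfl, Ehat, if_pos rfl, ip_std]
  · rw [Ehat, if_pos rfl, Ehat, if_neg hkl.ne, ip_smul_right, ip_add_right, ip_std, ip_std]
    have ha : ¬(i = k ∧ i = l) := by rintro ⟨rfl, rfl⟩; exact hkl.ne rfl
    have hb : ¬(i = l ∧ i = k) := by rintro ⟨rfl, rfl⟩; exact hkl.ne' rfl
    simp [ha, hb]
  · rw [Ehat, if_neg hij.ne, Ehat, if_pos rfl, ip_smul_left, ip_add_left, ip_std, ip_std]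
    have ha : ¬(i = k ∧ j = k) := by rintro ⟨rfl, rfl⟩; exact hij.ne rfl
    have hb : ¬(j = k ∧ i = k) := by rintro ⟨rfl, rfl⟩; exact hij.ne' rfl
    simp [ha, hb]
  · rw [Ehat, if_neg hij.ne, Ehat, if_neg hkl.ne, ip_smul_left, ip_smul_right,
      ip_add_left, ip_add_right, ip_add_right, ip_std, ip_std, ip_std, ip_std]
    have ha : ¬(i = l ∧ j = k) := by
      rintro ⟨rfl, rfl⟩; exact absurd (hij.trans hkl) (lt_irrefl _)
    have hb : ¬(j = k ∧ i = l) := fun h => ha ⟨h.2, h.1⟩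
    have hc : (j = l ∧ i = k) ↔ (i = k ∧ j = l) := and_comm
    rw [if_congr hc rfl rfl]
    simp only [ha, hb, if_false]
    split_ifs with h
    · field_simp
      rw [sq, h2]; norm_num
    · ring

end DCaux

open DCaux in
theorem diagonalized_commutator_sums (n m : ℕ) (hn : 1 ≤ n) (hm : 1 ≤ m)
    (Bfam : Fin m → Matrix (Fin n) (Fin n) ℝ) (hsymm : ∀ r, (Bfam r).IsSymm)
    (B : Matrix {p : Fin n × Fin n // p.1 ≤ p.2} (Fin m) ℝ)
    (hB : ∀ r, Bfam r = ∑ α : {p : Fin n × Fin n // p.1 ≤ p.2},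
      B α r • Ehat α.1.1 α.1.2)
    (Q : Matrix {p : Fin n × Fin n // p.1 ≤ p.2} {p : Fin n × Fin n // p.1 ≤ p.2} ℝ)
    (hQ : Q * Qᵀ = 1) (hdetQ : Q.det = 1)
    (x : {p : Fin n × Fin n // p.1 ≤ p.2} → ℝ) (hx : ∀ α, 0 ≤ x α)
    (hBBt : B * Bᵀ = Q * Matrix.diagonal x * Qᵀ)
    (Qhat : {p : Fin n × Fin n // p.1 ≤ p.2} → Matrix (Fin n) (Fin n) ℝ)
    (hQhat : ∀ α, Qhat α = ∑ β : {p : Fin n × Fin n // p.1 ≤ p.2},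
      Q β α • Ehat β.1.1 β.1.2) :
    (∑ r, ∑ s, frobSq (mcomm (Bfam r) (Bfam s)) =
      ∑ α, ∑ β, x α * x β * frobSq (mcomm (Qhat α) (Qhat β))) ∧
    ∑ r, frobSq (Bfam r) = ∑ α, x α := by
  let I := {p : Fin n × Fin n // p.1 ≤ p.2}
  let E : I → Matrix (Fin n) (Fin n) ℝ := fun α => Ehat α.1.1 α.1.2
  have hE : ∀ α : I, E α = Ehat α.1.1 α.1.2 := fun _ => rfl
  let T : (I × I) → (I × I) → ℝ :=
    fun p q => ip (mcomm (E p.1) (E p.2)) (mcomm (E q.1) (E q.2))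
  let D : Matrix I I ℝ := Q * Matrix.diagonal x * Qᵀ
  -- expansion of frobSq of a commutator of two basis expansions
  have hfr : ∀ u v : I → ℝ, frobSq (mcomm (∑ α, u α • E α) (∑ β, v β • E β)) =
      ∑ p : I × I, ∑ q : I × I, (u p.1 * v p.2) * (u q.1 * v q.2) * T p q := by
    intro u v
    rw [frobSq_eq_ip, mcomm_sum, ip_sum_sum]
  have hD : ∀ γ γ' : I, D γ γ' = ∑ α, x α * Q γ α * Q γ' α := by
    intro γ γ'
    show (Q * Matrix.diagonal x * Qᵀ) γ γ' = _
    rw [Matrix.mul_assoc, Matrix.mul_apply]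
    refine Finset.sum_congr rfl fun α _ => ?_
    rw [Matrix.mul_apply]
    simp [Matrix.diagonal_apply, Finset.mul_sum, Finset.sum_ite_eq]
    ring
  constructor
  · -- part 1
    calc ∑ r, ∑ s, frobSq (mcomm (Bfam r) (Bfam s))
        = ∑ r, ∑ s, ∑ p : I × I, ∑ q : I × I,
            (B p.1 r * B p.2 s) * (B q.1 r * B q.2 s) * T p q := by
          refine Finset.sum_congr rfl fun r _ => Finset.sum_congr rfl fun s _ => ?_
          rw [hB r, hB s]
          exact hfr _ _
      _ = ∑ k : Fin m × Fin m, ∑ p : I × I, ∑ q : I × I,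
            (B p.1 k.1 * B p.2 k.2) * (B q.1 k.1 * B q.2 k.2) * T p q := by
          rw [Fintype.sum_prod_type]
      _ = ∑ p : I × I, ∑ q : I × I,
            (∑ k : Fin m × Fin m, (B p.1 k.1 * B p.2 k.2) * (B q.1 k.1 * B q.2 k.2)) * T p q :=
          swap_sum _ _ _
      _ = ∑ p : I × I, ∑ q : I × I, (D p.1 q.1 * D p.2 q.2) * T p q := by
          refine Finset.sum_congr rfl fun p _ => Finset.sum_congr rfl fun q _ => ?_
          congr 1
          have : (∑ k : Fin m × Fin m, (B p.1 k.1 * B p.2 k.2) * (B q.1 k.1 * B q.2 k.2))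
              = (∑ r, B p.1 r * B q.1 r) * (∑ s, B p.2 s * B q.2 s) := by
            rw [Finset.sum_mul_sum, Fintype.sum_prod_type]
            exact Finset.sum_congr rfl fun r _ => Finset.sum_congr rfl fun s_ _ => by ring
          rw [this]
          have hM : ∀ a b : I, (B * Bᵀ) a b = ∑ r, B a r * B b r := by
            intro a b; simp [Matrix.mul_apply]
          rw [← hM, ← hM, hBBt]
      _ = ∑ α, ∑ β, x α * x β * frobSq (mcomm (Qhat α) (Qhat β)) := by
          symm
          calc ∑ α, ∑ β, x α * x β * frobSq (mcomm (Qhat α) (Qhat β))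
              = ∑ α, ∑ β, ∑ p : I × I, ∑ q : I × I,
                  ((x α * x β) * (Q p.1 α * Q p.2 β)) * (Q q.1 α * Q q.2 β) * T p q := by
                refine Finset.sum_congr rfl fun α _ => Finset.sum_congr rfl fun β _ => ?_
                rw [hQhat α, hQhat β, hfr]
                rw [Finset.mul_sum]
                refine Finset.sum_congr rfl fun p _ => ?_
                rw [Finset.mul_sum]
                refine Finset.sum_congr rfl fun q _ => ?_
                ring
            _ = ∑ k : I × I, ∑ p : I × I, ∑ q : I × I,
                  ((x k.1 * x k.2) * (Q p.1 k.1 * Q p.2 k.2)) * (Q q.1 k.1 * Q q.2 k.2) * T p q := by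
                rw [Fintype.sum_prod_type]
            _ = ∑ p : I × I, ∑ q : I × I,
                  (∑ k : I × I,
                    ((x k.1 * x k.2) * (Q p.1 k.1 * Q p.2 k.2)) * (Q q.1 k.1 * Q q.2 k.2)) * T p q :=
                swap_sum _ _ _
            _ = ∑ p : I × I, ∑ q : I × I, (D p.1 q.1 * D p.2 q.2) * T p q := by
                refine Finset.sum_congr rfl fun p _ => Finset.sum_congr rfl fun q _ => ?_
                congr 1
                have : (∑ k : I × I,
                    ((x k.1 * x k.2) * (Q p.1 k.1 * Q p.2 k.2)) * (Q q.1 k.1 * Q q.2 k.2))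
                    = (∑ α, x α * Q p.1 α * Q q.1 α) * (∑ β, x β * Q p.2 β * Q q.2 β) := by
                  rw [Finset.sum_mul_sum, Fintype.sum_prod_type]
                  exact Finset.sum_congr rfl fun a _ => Finset.sum_congr rfl fun b _ => by ring
                rw [this, ← hD, ← hD]
  · -- part 2
    have ortho : ∀ α β : I, ip (E α) (E β) = if α = β then 1 else 0 := by
      intro α β
      rw [hE, hE, ip_Ehat α.2 β.2]
      congr 1
      exact propext ⟨fun h => Subtype.ext (Prod.ext h.1 h.2), fun h => by subst h; exact ⟨rfl, rfl⟩⟩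
    have h1 : ∀ r, frobSq (Bfam r) = ∑ α, B α r * B α r := by
      intro r
      rw [hB r, frobSq_eq_ip, ip_sum_sum]
      simp [← hE, ortho, mul_ite, Finset.sum_ite_eq']
    calc ∑ r, frobSq (Bfam r) = ∑ r, ∑ α, B α r * B α r := by
          exact Finset.sum_congr rfl fun r _ => h1 r
      _ = ∑ α : I, (B * Bᵀ) α α := by
          rw [Finset.sum_comm]
          exact Finset.sum_congr rfl fun α _ => by simp [Matrix.mul_apply]
      _ = Matrix.trace (B * Bᵀ) := rfl
      _ = Matrix.trace (Q * Matrix.diagonal x * Qᵀ) := by rw [hBBt]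
      _ = Matrix.trace (Qᵀ * Q * Matrix.diagonal x) := by rw [Matrix.trace_mul_cycle]
      _ = ∑ α, x α := by
          rw [mul_eq_one_comm.mp hQ, one_mul, Matrix.trace_diagonal]
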